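/- Let ε : ℝ with 0 < ε < 1/3, let ℓ', m : ℕ, and let p : ℝ≥0∞ with hp : p ≤ 1 be such that (m : ℝ) · p.toReal = (1/3 + ε) · ℓ'. Under the binomial distribution PMF.binomial p hp m on Fin (m+1), the probability of the event {k : Fin (m+1) | (k : ℝ) ≤ (ℓ' : ℝ)/3} is at most ENNReal.ofReal (Real.exp (−(3·ε^2·ℓ') / (2·(1 + 3·ε)))). -/

import Mathlib

open scoped ENNReal

lemma xlogx_bound {x : ℝ} (hx0 : 0 < x) (hx1 : x ≤ 1) :
    x - 1 + (1 - x)^2 / 2 ≤ x * Real.log x := by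
  rcases eq_or_lt_of_le hx1 with rfl | hx1
  · simp
  set f : ℝ → ℝ := fun y => y * Real.log y - (y - 1) - (1 - y)^2/2 with hf
  have hder : ∀ y ∈ Set.Ioo x 1, HasDerivAt f (Real.log y + 1 - y) y := by
    intro y hy
    have h1 : HasDerivAt (fun y : ℝ => y * Real.log y) (Real.log y + 1) y :=
      Real.hasDerivAt_mul_log (ne_of_gt (lt_trans hx0 hy.1))
    have h2 : HasDerivAt (fun y : ℝ => (y - 1)) 1 y := (hasDerivAt_id y).sub_const 1
    have h3 : HasDerivAt (fun y : ℝ => (1 - y)^2/2) (y - 1) y := by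
      have : HasDerivAt (fun y : ℝ => (1 - y)^2) (2 * (1 - y) * (-1)) y :=
        ((hasDerivAt_id y).const_sub 1).pow 2 |>.congr_deriv (by simp [id_eq])
      have := this.div_const 2
      exact this.congr_deriv (by ring)
    have := (h1.sub h2).sub h3
    exact this.congr_deriv (by ring)
  have hcont : ContinuousOn f (Set.Icc x 1) := by
    apply ContinuousOn.sub
    apply ContinuousOn.sub
    · exact Real.continuous_mul_log.continuousOn
    · fun_prop
    · fun_prop
  have hanti : AntitoneOn f (Set.Icc x 1) := by
    apply antitoneOn_of_deriv_nonpos (convex_Icc x 1) hcont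
    · intro y hy
      rw [interior_Icc] at hy
      exact (hder y hy).differentiableAt.differentiableWithinAt
    · intro y hy
      rw [interior_Icc] at hy
      rw [(hder y hy).deriv]
      have := Real.log_le_sub_one_of_pos (lt_trans hx0 hy.1)
      linarith
  have := hanti (Set.left_mem_Icc.2 hx1.le) (Set.right_mem_Icc.2 hx1.le) hx1.le
  simp only [hf] at this
  simp at this
  linarith [this]

set_option maxHeartbeats 1000000 in
/-- Lower-tail Chernoff bound used in the robustness proof of the OWF-based SRDS:
for a binomial with `m` trials and mean `(1/3 + ε)·ℓ'`, the number of successes is at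
most `ℓ'/3` with probability at most `exp(−3ε²ℓ'/(2(1+3ε)))`. -/
theorem binomial_chernoff_lower_tail (ε : ℝ) (hε0 : 0 < ε) (hε1 : ε < 1 / 3)
    (ℓ' m : ℕ) (p : ℝ≥0∞) (hp : p ≤ 1)
    (hmean : (m : ℝ) * p.toReal = (1 / 3 + ε) * (ℓ' : ℝ)) :
    (PMF.binomial p.toNNReal (by simpa using ENNReal.toNNReal_mono ENNReal.one_ne_top hp) m).toOuterMeasure
        {k : Fin (m + 1) | (k.val : ℝ) ≤ (ℓ' : ℝ) / 3} ≤
      ENNReal.ofReal (Real.exp (-(3 * ε ^ 2 * (ℓ' : ℝ)) / (2 * (1 + 3 * ε)))) := by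
  classical
  have hp' : p.toNNReal ≤ 1 := by simpa using ENNReal.toNNReal_mono ENNReal.one_ne_top hp
  have hp_top : p ≠ ∞ := (lt_of_le_of_lt hp ENNReal.one_lt_top).ne
  set r : ℝ := p.toReal with hr
  have hr0 : 0 ≤ r := ENNReal.toReal_nonneg
  have hr1 : r ≤ 1 := by simpa using ENNReal.toReal_mono ENNReal.one_ne_top hp
  have hq : (1 - p : ℝ≥0∞) = ENNReal.ofReal (1 - r) := by
    rw [ENNReal.ofReal_sub _ hr0, ENNReal.ofReal_one, ENNReal.ofReal_toReal hp_top]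
  have hpr : p = ENNReal.ofReal r := (ENNReal.ofReal_toReal hp_top).symm
  have h3ε : (0:ℝ) < 1 + 3*ε := by linarith
  set δ : ℝ := 3*ε/(1+3*ε) with hδ
  have hδ0 : 0 < δ := by positivity
  have hδ1 : δ < 1 := by rw [hδ, div_lt_one h3ε]; linarith
  set x : ℝ := 1 - δ with hxdef
  have hx0 : 0 < x := by simp only [hxdef]; linarith
  have hx1 : x ≤ 1 := by simp only [hxdef]; linarith
  set t : ℝ := -Real.log x with ht
  have ht0 : 0 ≤ t := by
    rw [ht, neg_nonneg]
    exact Real.log_nonpos hx0.le hx1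
  have hext : Real.exp (-t) = x := by rw [ht, neg_neg, Real.exp_log hx0]
  set a : ℝ := (ℓ' : ℝ)/3 with ha
  have ha0 : 0 ≤ a := by positivity
  set g : ℕ → ℝ := fun k => Real.exp (t*(a-k)) * (r^k * (1-r)^(m-k) * (m.choose k)) with hg
  have hg0 : ∀ k, 0 ≤ g k := by
    intro k
    have : (0:ℝ) ≤ 1 - r := by linarith
    positivity
  have hterm : ∀ k : Fin (m+1), PMF.binomial p.toNNReal hp' m k
      = ENNReal.ofReal (r ^ (k:ℕ) * (1 - r) ^ (m - (k:ℕ)) * (m.choose k)) := by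
    intro k
    have h1r : (0:ℝ) ≤ 1 - r := by linarith
    rw [PMF.binomial_apply, ENNReal.coe_toNNReal hp_top, hq, hpr,
      show ((Fin.last m : Fin (m+1)) : ℕ) = m from Fin.val_last m,
      ← ENNReal.ofReal_pow hr0, ← ENNReal.ofReal_pow h1r,
      ← ENNReal.ofReal_natCast (m.choose k),
      ← ENNReal.ofReal_mul (by positivity), ← ENNReal.ofReal_mul (by positivity)]
  calc (PMF.binomial p.toNNReal hp' m).toOuterMeasure {k : Fin (m + 1) | (k.val : ℝ) ≤ (ℓ' : ℝ) / 3}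
      = ∑ k : Fin (m+1), Set.indicator {k : Fin (m + 1) | (k.val : ℝ) ≤ (ℓ' : ℝ) / 3}
          (PMF.binomial p.toNNReal hp' m) k := by
        rw [PMF.toOuterMeasure_apply, tsum_fintype]
    _ ≤ ∑ k : Fin (m+1), ENNReal.ofReal (g (k:ℕ)) := by
        apply Finset.sum_le_sum
        intro k _
        by_cases hk : (k.val : ℝ) ≤ (ℓ' : ℝ) / 3
        · rw [Set.indicator_of_mem (s := {k : Fin (m + 1) | (k.val : ℝ) ≤ (ℓ' : ℝ) / 3}) hk, hterm k]
          apply ENNReal.ofReal_le_ofReal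
          have hexp1 : 1 ≤ Real.exp (t*(a-(k:ℕ))) := by
            apply Real.one_le_exp
            have : (0:ℝ) ≤ a - (k:ℕ) := by rw [ha]; linarith
            positivity
          have h1r : (0:ℝ) ≤ 1 - r := by linarith
          have hnn : (0:ℝ) ≤ r ^ (k:ℕ) * (1 - r) ^ (m - (k:ℕ)) * (m.choose k) := by positivity
          simpa only [hg] using le_mul_of_one_le_left hnn hexp1
        · rw [Set.indicator_of_notMem (s := {k : Fin (m + 1) | (k.val : ℝ) ≤ (ℓ' : ℝ) / 3}) hk]
          exact zero_le
    _ = ENNReal.ofReal (∑ k : Fin (m+1), g (k:ℕ)) :=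
        (ENNReal.ofReal_sum_of_nonneg (fun k _ => hg0 k.val)).symm
    _ ≤ ENNReal.ofReal (Real.exp (-(3 * ε ^ 2 * (ℓ' : ℝ)) / (2 * (1 + 3 * ε)))) := by
        apply ENNReal.ofReal_le_ofReal
        have h1r : (0:ℝ) ≤ 1 - r := by linarith
        have hsum_eq : ∑ k : Fin (m+1), g (k:ℕ)
            = Real.exp (t*a) * (x*r + (1-r))^m := by
          rw [Fin.sum_univ_eq_sum_range (fun k => g k), add_pow, Finset.mul_sum]
          apply Finset.sum_congr rfl
          intro k hk
          simp only [hg]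
          have : Real.exp (t*(a-(k:ℕ))) = Real.exp (t*a) * x^k := by
            rw [← hext, ← Real.exp_nat_mul, ← Real.exp_add]
            ring_nf
          rw [this, mul_pow]
          ring
        rw [hsum_eq]
        have hbase0 : (0:ℝ) ≤ x*r + (1-r) := by nlinarith
        have hD : (x*r + (1-r))^m ≤ Real.exp ((m:ℝ) * (r*(x-1))) := by
          calc (x*r + (1-r))^m ≤ (Real.exp (r*(x-1)))^m := by
                apply pow_le_pow_left₀ hbase0
                have := Real.add_one_le_exp (r*(x-1))
                linarith
            _ = Real.exp ((m:ℝ) * (r*(x-1))) := by rw [← Real.exp_nat_mul]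
        calc Real.exp (t*a) * (x*r + (1-r))^m
            ≤ Real.exp (t*a) * Real.exp ((m:ℝ) * (r*(x-1))) := by
              apply mul_le_mul_of_nonneg_left hD (Real.exp_nonneg _)
          _ = Real.exp (t*a + (m:ℝ) * (r*(x-1))) := (Real.exp_add _ _).symm
          _ ≤ Real.exp (-(3 * ε ^ 2 * (ℓ' : ℝ)) / (2 * (1 + 3 * ε))) := by
              apply Real.exp_le_exp.2
              have hkey := xlogx_bound hx0 hx1
              have hμ0 : (0:ℝ) ≤ (1/3+ε)*(ℓ':ℝ) := by positivity
              have hmr : (m:ℝ) * (r*(x-1)) = -δ * ((1/3+ε)*(ℓ':ℝ)) := by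
                rw [← mul_assoc, hmean, hxdef]; ring
              have hax : a = x * ((1/3+ε)*(ℓ':ℝ)) := by
                rw [ha, hxdef, hδ]; field_simp; ring
              have h1 : -Real.log x * x ≤ δ - δ^2/2 := by
                have hx' : (1 - x)^2 = δ^2 := by rw [hxdef]; ring
                nlinarith [hkey]
              have hta : t * a ≤ (δ - δ^2/2) * ((1/3+ε)*(ℓ':ℝ)) := by
                rw [hax, ht]
                calc -Real.log x * (x * ((1/3+ε)*(ℓ':ℝ)))
                    = (-Real.log x * x) * ((1/3+ε)*(ℓ':ℝ)) := by ring
                  _ ≤ (δ - δ^2/2) * ((1/3+ε)*(ℓ':ℝ)) :=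
                      mul_le_mul_of_nonneg_right h1 hμ0
              have hid : δ^2 * ((1/3+ε)*(ℓ':ℝ)) / 2
                  = 3 * ε ^ 2 * (ℓ' : ℝ) / (2 * (1 + 3 * ε)) := by
                rw [hδ]; field_simp
              rw [hmr]
              have hexp2 : (δ - δ^2/2) * ((1/3+ε)*(ℓ':ℝ))
                  = δ*((1/3+ε)*(ℓ':ℝ)) - δ^2*((1/3+ε)*(ℓ':ℝ))/2 := by ring
              have hneg : -(3 * ε ^ 2 * (ℓ':ℝ)) / (2 * (1 + 3 * ε))
                  = -(3 * ε ^ 2 * (ℓ':ℝ) / (2 * (1 + 3 * ε))) := by ring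
              rw [hneg]
              linarith [hta, hid, hexp2]
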